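/- Let (t⁽ⁿ⁾)_{n ∈ ℤ} be a strictly increasing sequence of real numbers with δt^{(n+1/2)} := t^{(n+1)} − t^{(n)} ≤ δt for all n (for some δt > 0), t^{(n)} → −∞ as n → −∞ and t^{(n)} → +∞ as n → +∞. For t ∈ ℝ, let n(t) be the unique n ∈ ℤ with t ∈ (t^{(n)}, t^{(n+1)}]. Let (a^{(n)})_{n ∈ ℤ} be a family of nonnegative real numbers with only finitely many nonzero values. Then for every τ > 0 and every s ∈ ℝ: ∫_ℝ ( ∑_{n = n(t)+1}^{n(t+τ)} δt^{(n+1/2)} ) · a^{(n(t+s)+1)} dt ≤ (τ + δt) · ∑_{n ∈ ℤ} δt^{(n+1/2)} a^{(n+1)}. -/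

import Mathlib

open MeasureTheory Filter Topology

/-- For a strictly increasing doubly-infinite partition `(t n)_{n ∈ ℤ}` of `ℝ` with steps
bounded by `δt`, `n(r)` the index with `r ∈ (t (n r), t (n r + 1)]`, and `(a n)` nonnegative
with finite support, for every `τ > 0` and `s ∈ ℝ`:
`∫_ℝ (∑_{n = n(r)+1}^{n(r+τ)} (t(n+1) - t(n))) · a(n(r+s)+1) dr
  ≤ (τ + δt) ∑_{n ∈ ℤ} (t(n+1) - t(n)) a(n+1)`. -/
theorem stmt15 (t : ℤ → ℝ) (ht : StrictMono t)
    (δt : ℝ) (hδt : 0 < δt) (hstep : ∀ n : ℤ, t (n + 1) - t n ≤ δt)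
    (hbot : Tendsto t atBot atBot) (htop : Tendsto t atTop atTop)
    (nt : ℝ → ℤ) (hnt : ∀ r : ℝ, r ∈ Set.Ioc (t (nt r)) (t (nt r + 1)))
    (a : ℤ → ℝ) (ha : ∀ n, 0 ≤ a n) (hfin : (Function.support a).Finite)
    (τ : ℝ) (hτ : 0 < τ) (s : ℝ) :
    ∫ r : ℝ, (∑ n ∈ Finset.Icc (nt r + 1) (nt (r + τ)), (t (n + 1) - t n)) * a (nt (r + s) + 1)
      ≤ (τ + δt) * ∑' n : ℤ, (t (n + 1) - t n) * a (n + 1) := by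
  -- uniqueness of nt
  have ntu : ∀ (n : ℤ) (r : ℝ), r ∈ Set.Ioc (t n) (t (n + 1)) → nt r = n := by
    intro n r hr
    by_contra hne
    rcases lt_or_gt_of_ne hne with h | h
    · have h1 : nt r + 1 ≤ n := h
      have := (ht.monotone h1).trans_lt hr.1
      exact absurd (hnt r).2 (not_le.mpr this)
    · have h1 : n + 1 ≤ nt r := h
      have := (ht.monotone h1).trans_lt (hnt r).1
      exact absurd hr.2 (not_le.mpr this)
  -- telescoping sum
  have tele : ∀ m M : ℤ, m ≤ M →
      ∑ n ∈ Finset.Icc (m + 1) M, (t (n + 1) - t n) = t (M + 1) - t (m + 1) := by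
    intro m
    refine Int.le_induction ?_ ?_
    · simp
    · intro M hM ih
      have hins : Finset.Icc (m + 1) (M + 1) = insert (M + 1) (Finset.Icc (m + 1) M) := by
        ext x; simp only [Finset.mem_Icc, Finset.mem_insert]; omega
      rw [hins, Finset.sum_insert (by simp), ih]
      ring
  -- nt is monotone-ish
  have ntmono : ∀ r : ℝ, nt r ≤ nt (r + τ) := by
    intro r
    by_contra h
    have h1 : nt (r + τ) + 1 ≤ nt r := by omega
    have := (ht.monotone h1).trans_lt (hnt r).1
    have h2 : r + τ ≤ t (nt (r + τ) + 1) := (hnt (r + τ)).2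
    linarith
  -- the inner sum is bounded by τ + δt and nonneg
  have sum_nonneg : ∀ r : ℝ,
      0 ≤ ∑ n ∈ Finset.Icc (nt r + 1) (nt (r + τ)), (t (n + 1) - t n) := by
    intro r
    exact Finset.sum_nonneg fun n _ => sub_nonneg.mpr (ht.monotone (by omega))
  have sum_le : ∀ r : ℝ,
      ∑ n ∈ Finset.Icc (nt r + 1) (nt (r + τ)), (t (n + 1) - t n) ≤ τ + δt := by
    intro r
    rw [tele _ _ (ntmono r)]
    have h1 : r ≤ t (nt r + 1) := (hnt r).2
    have h2 : t (nt (r + τ)) < r + τ := (hnt (r + τ)).1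
    have h3 := hstep (nt (r + τ))
    linarith
  -- finite index set
  set S : Finset ℤ := hfin.toFinset.image (· - 1) with hS
  have hmemS : ∀ n : ℤ, n ∈ S ↔ a (n + 1) ≠ 0 := by
    intro n
    simp only [hS, Finset.mem_image, Set.Finite.mem_toFinset, Function.mem_support]
    constructor
    · rintro ⟨m, hm, rfl⟩; simpa using hm
    · intro h; exact ⟨n + 1, h, by ring⟩
  -- representation of r ↦ a (nt r + 1)
  have key : (fun r : ℝ => a (nt r + 1)) =
      fun r => ∑ n ∈ S, (Set.Ioc (t n) (t (n + 1))).indicator (fun _ => a (n + 1)) r := by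
    funext r
    rw [Finset.sum_eq_single (nt r)]
    · exact (Set.indicator_of_mem (hnt r) (fun _ => a (nt r + 1))).symm
    · intro b _ hb
      exact Set.indicator_of_notMem (fun hr => hb (ntu b r hr).symm) _
    · intro hns
      rw [Set.indicator_of_mem (hnt r)]
      by_contra h
      exact hns ((hmemS _).mpr h)
  -- integrability of each indicator
  have hIoc : ∀ n : ℤ, MeasurableSet (Set.Ioc (t n) (t (n + 1))) := fun n => measurableSet_Ioc
  have hint : ∀ n : ℤ,
      Integrable ((Set.Ioc (t n) (t (n + 1))).indicator (fun _ => a (n + 1))) := by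
    intro n
    rw [integrable_indicator_iff (hIoc n)]
    exact integrableOn_const (by simp [Real.volume_Ioc])
  have hInt : Integrable (fun r : ℝ => a (nt r + 1)) := by
    rw [key]; exact integrable_finset_sum S fun n _ => hint n
  -- value of ∫ a (nt r + 1)
  have hval : ∫ r : ℝ, a (nt r + 1) = ∑ n ∈ S, (t (n + 1) - t n) * a (n + 1) := by
    rw [key, integral_finset_sum S fun n _ => hint n]
    refine Finset.sum_congr rfl fun n _ => ?_
    rw [integral_indicator_const _ (hIoc n), measureReal_def, Real.volume_Ioc, smul_eq_mul,
      ENNReal.toReal_ofReal (sub_nonneg.mpr (ht.monotone (by omega : n ≤ n + 1)))]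
  -- tsum equals finite sum
  have htsum : ∑' n : ℤ, (t (n + 1) - t n) * a (n + 1) = ∑ n ∈ S, (t (n + 1) - t n) * a (n + 1) := by
    refine tsum_eq_sum fun n hn => ?_
    have : a (n + 1) = 0 := by
      by_contra h; exact hn ((hmemS n).mpr h)
    rw [this, mul_zero]
  -- integrable majorant
  have hIntg : Integrable (fun r : ℝ => (τ + δt) * a (nt (r + s) + 1)) :=
    (hInt.comp_add_right s).const_mul _
  calc ∫ r : ℝ, (∑ n ∈ Finset.Icc (nt r + 1) (nt (r + τ)), (t (n + 1) - t n)) * a (nt (r + s) + 1)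
      ≤ ∫ r : ℝ, (τ + δt) * a (nt (r + s) + 1) := by
        refine integral_mono_of_nonneg (Filter.Eventually.of_forall fun r => ?_) hIntg
          (Filter.Eventually.of_forall fun r => ?_)
        · exact mul_nonneg (sum_nonneg r) (ha _)
        · exact mul_le_mul_of_nonneg_right (sum_le r) (ha _)
    _ = (τ + δt) * ∫ r : ℝ, a (nt (r + s) + 1) := integral_const_mul _ _
    _ = (τ + δt) * ∫ r : ℝ, a (nt r + 1) := by
        rw [integral_add_right_eq_self (fun r : ℝ => a (nt r + 1)) s]
    _ = (τ + δt) * ∑' n : ℤ, (t (n + 1) - t n) * a (n + 1) := by rw [hval, htsum]
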